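/- arXiv:2405.07147 — 2 statements merged into one kernel-verified Lean document; each statement's English description precedes it below -/
import Mathlib

section
/- Let A ∈ ℝ^{m×n}, let Q ∈ ℝ^{m×μ} be orthonormal (QᵀQ = I_μ), and let R ∈ ℝ^{μ×ℓ}, Ω ∈ ℝ^{m×ℓ}, F ∈ ℝ^{ℓ×m} be arbitrary real matrices. Then ‖AAᵀ − QQᵀAAᵀ‖_F ≤ 2‖AAᵀΩF − AAᵀ‖_F + 2‖F‖₂ · ‖QR − AAᵀΩ‖_F. -/
open Matrix
open scoped BigOperators

noncomputable section

/-- Frobenius norm of a real matrix. -/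
def frobNorm {m n : ℕ} (A : Matrix (Fin m) (Fin n) ℝ) : ℝ :=
  Real.sqrt (∑ i, ∑ j, A i j ^ 2)

/-- Nonincreasing rearrangement of a finite tuple of reals. -/
def sortedDesc {n : ℕ} (f : Fin n → ℝ) : Fin n → ℝ :=
  fun k => - ((fun i => - f i) ∘ Tuple.sort (fun i => - f i)) k

/-- `sval A k` is the `(k+1)`-st largest singular value of `A` (i.e. 0-based index `k`),
the square root of the `(k+1)`-st largest eigenvalue of `AᵀA`; it is `0` for `k ≥ n`
(in particular for `k ≥ min m n`). -/
def sval {m n : ℕ} (A : Matrix (Fin m) (Fin n) ℝ) (k : ℕ) : ℝ :=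
  if h : k < n then
    Real.sqrt (sortedDesc (Matrix.isHermitian_conjTranspose_mul_self A).eigenvalues ⟨k, h⟩)
  else 0

/-- Spectral norm (ℓ²→ℓ² operator norm) of a real matrix: its largest singular value. -/
def specNorm {m n : ℕ} (A : Matrix (Fin m) (Fin n) ℝ) : ℝ := sval A 0

/-- `tailDelta A μ = Δ_{μ+1}(A) = sqrt (Σ_{k=μ+1}^{min(m,n)} σ_k(A)²)` (with 1-based σ's,
so 0-based indices `μ, …, min m n - 1`). -/
def tailDelta {m n : ℕ} (A : Matrix (Fin m) (Fin n) ℝ) (μ : ℕ) : ℝ :=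
  Real.sqrt (∑ k ∈ Finset.Ico μ (min m n), sval A k ^ 2)

end

/-! ### Auxiliary lemmas -/

section Aux

lemma frobNorm_nonneg' {m n : ℕ} (A : Matrix (Fin m) (Fin n) ℝ) : 0 ≤ frobNorm A :=
  Real.sqrt_nonneg _

lemma frobSq_nonneg' {m n : ℕ} (A : Matrix (Fin m) (Fin n) ℝ) :
    0 ≤ ∑ i, ∑ j, A i j ^ 2 := by positivity

lemma frobNorm_sq' {m n : ℕ} (A : Matrix (Fin m) (Fin n) ℝ) :
    frobNorm A ^ 2 = ∑ i, ∑ j, A i j ^ 2 :=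
  Real.sq_sqrt (frobSq_nonneg' A)

lemma frobNorm_le_of_sq_le' {m n : ℕ} {A : Matrix (Fin m) (Fin n) ℝ} {c : ℝ}
    (hc : 0 ≤ c) (h : ∑ i, ∑ j, A i j ^ 2 ≤ c ^ 2) : frobNorm A ≤ c := by
  rw [frobNorm, show c = Real.sqrt (c ^ 2) by rw [Real.sqrt_sq hc]]
  exact Real.sqrt_le_sqrt h

lemma frob_cs' {m n : ℕ} (X Y : Matrix (Fin m) (Fin n) ℝ) :
    ∑ i, ∑ j, X i j * Y i j ≤ frobNorm X * frobNorm Y := by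
  have h1 : (∑ i, ∑ j, X i j * Y i j) = ∑ p : Fin m × Fin n, X p.1 p.2 * Y p.1 p.2 := by
    rw [Fintype.sum_prod_type]
  have h2 : (∑ i, ∑ j, X i j ^ 2) = ∑ p : Fin m × Fin n, X p.1 p.2 ^ 2 := by
    rw [Fintype.sum_prod_type]
  have h3 : (∑ i, ∑ j, Y i j ^ 2) = ∑ p : Fin m × Fin n, Y p.1 p.2 ^ 2 := by
    rw [Fintype.sum_prod_type]
  have cs := Finset.sum_mul_sq_le_sq_mul_sq Finset.univ
    (fun p : Fin m × Fin n => X p.1 p.2) (fun p => Y p.1 p.2)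
  calc ∑ i, ∑ j, X i j * Y i j
      ≤ |∑ i, ∑ j, X i j * Y i j| := le_abs_self _
    _ = Real.sqrt ((∑ i, ∑ j, X i j * Y i j) ^ 2) := (Real.sqrt_sq_eq_abs _).symm
    _ ≤ Real.sqrt ((∑ i, ∑ j, X i j ^ 2) * (∑ i, ∑ j, Y i j ^ 2)) := by
        apply Real.sqrt_le_sqrt; rw [h1, h2, h3]; exact cs
    _ = frobNorm X * frobNorm Y := Real.sqrt_mul (frobSq_nonneg' X) _

lemma frobNorm_add_le' {m n : ℕ} (X Y : Matrix (Fin m) (Fin n) ℝ) :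
    frobNorm (X + Y) ≤ frobNorm X + frobNorm Y := by
  apply frobNorm_le_of_sq_le' (add_nonneg (frobNorm_nonneg' X) (frobNorm_nonneg' Y))
  have : ∑ i, ∑ j, (X + Y) i j ^ 2
      = (∑ i, ∑ j, X i j ^ 2) + 2 * (∑ i, ∑ j, X i j * Y i j) + ∑ i, ∑ j, Y i j ^ 2 := by
    simp only [Matrix.add_apply, ← Finset.sum_add_distrib, Finset.mul_sum]
    refine Finset.sum_congr rfl fun i _ => Finset.sum_congr rfl fun j _ => by ring
  rw [this]
  have h := frob_cs' X Y
  have hx := frobNorm_sq' X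
  have hy := frobNorm_sq' Y
  nlinarith [frobNorm_nonneg' X, frobNorm_nonneg' Y]

lemma frobNorm_neg' {m n : ℕ} (X : Matrix (Fin m) (Fin n) ℝ) :
    frobNorm (-X) = frobNorm X := by
  unfold frobNorm; congr 1
  refine Finset.sum_congr rfl fun i _ => Finset.sum_congr rfl fun j _ => by
    simp [Matrix.neg_apply]

lemma frobSq_eq_trace' {m n : ℕ} (A : Matrix (Fin m) (Fin n) ℝ) :
    ∑ i, ∑ j, A i j ^ 2 = (Aᵀ * A).trace := by
  rw [Matrix.trace, Finset.sum_comm]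
  refine Finset.sum_congr rfl fun j _ => ?_
  simp [Matrix.diag, Matrix.mul_apply, sq, Matrix.transpose_apply]

lemma frobNorm_proj_le' {m μ k : ℕ} (Q : Matrix (Fin m) (Fin μ) ℝ) (hQ : Qᵀ * Q = 1)
    (M : Matrix (Fin m) (Fin k) ℝ) : frobNorm (M - Q * Qᵀ * M) ≤ frobNorm M := by
  have h2 : ∀ {k' : ℕ} (X : Matrix (Fin μ) (Fin k') ℝ), Qᵀ * (Q * X) = X := by
    intro k' X; rw [← Matrix.mul_assoc, hQ, Matrix.one_mul]
  have e1 : (M - Q * Qᵀ * M)ᵀ * (M - Q * Qᵀ * M) = Mᵀ * M - (Qᵀ * M)ᵀ * (Qᵀ * M) := by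
    simp only [Matrix.transpose_sub, Matrix.transpose_mul, Matrix.transpose_transpose,
      Matrix.sub_mul, Matrix.mul_sub, Matrix.mul_assoc, h2]
    abel
  apply frobNorm_le_of_sq_le' (frobNorm_nonneg' M)
  rw [frobNorm_sq', frobSq_eq_trace', frobSq_eq_trace', e1, Matrix.trace_sub]
  have : 0 ≤ ((Qᵀ * M)ᵀ * (Qᵀ * M)).trace := by
    rw [← frobSq_eq_trace']; exact frobSq_nonneg' _
  linarith

lemma quadForm_le' {d : ℕ} {S : Matrix (Fin d) (Fin d) ℝ} (hS : S.IsHermitian)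
    {c : ℝ} (hc : ∀ i, hS.eigenvalues i ≤ c) (v : Fin d → ℝ) :
    v ⬝ᵥ (S *ᵥ v) ≤ c * (v ⬝ᵥ v) := by
  classical
  set b := hS.eigenvectorBasis with hb
  have hrepr : ∀ (x y : EuclideanSpace ℝ (Fin d)),
      (x : Fin d → ℝ) ⬝ᵥ (y : Fin d → ℝ) = ∑ i, b.repr x i * b.repr y i := by
    intro x y
    have h := b.repr.inner_map_map x y
    simp only [PiLp.inner_apply, RCLike.inner_apply, starRingEnd_apply, star_trivial] at h
    simpa [dotProduct, mul_comm] using h.symm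
  have hsymm : Sᵀ = S := by
    have := hS.eq
    rwa [Matrix.conjTranspose_eq_transpose_of_trivial] at this
  have hkey : ∀ i, b.repr (WithLp.toLp 2 (S *ᵥ v : Fin d → ℝ)) i
      = hS.eigenvalues i * b.repr (WithLp.toLp 2 v) i := by
    intro i
    rw [OrthonormalBasis.repr_apply_apply, OrthonormalBasis.repr_apply_apply]
    simp only [PiLp.inner_apply, RCLike.inner_apply, starRingEnd_apply, star_trivial]
    simp_rw [mul_comm ((S *ᵥ v) _), mul_comm (v _)]
    have h1 : (⇑(b i) : Fin d → ℝ) ⬝ᵥ (S *ᵥ v) = (S *ᵥ ⇑(b i)) ⬝ᵥ v := by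
      rw [dotProduct_mulVec, ← mulVec_transpose, hsymm]
    have h2 : S *ᵥ ⇑(b i) = hS.eigenvalues i • ⇑(b i) := hS.mulVec_eigenvectorBasis i
    calc ∑ j, (b i) j * (S *ᵥ v) j = (⇑(b i) : Fin d → ℝ) ⬝ᵥ (S *ᵥ v) := rfl
      _ = (S *ᵥ ⇑(b i)) ⬝ᵥ v := h1
      _ = hS.eigenvalues i * (⇑(b i) ⬝ᵥ v) := by rw [h2, smul_dotProduct]; rfl
      _ = hS.eigenvalues i * ∑ j, (b i) j * v j := rfl
  have e1 : v ⬝ᵥ (S *ᵥ v) = ∑ i, hS.eigenvalues i *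
      (b.repr (WithLp.toLp 2 v) i)^2 := by
    rw [show v ⬝ᵥ (S *ᵥ v) = _ from hrepr (WithLp.toLp 2 v) (WithLp.toLp 2 (S *ᵥ v))]
    refine Finset.sum_congr rfl fun i _ => ?_
    rw [hkey i]; ring
  have e2 : v ⬝ᵥ v = ∑ i, (b.repr (WithLp.toLp 2 v) i)^2 := by
    rw [show v ⬝ᵥ v = _ from hrepr (WithLp.toLp 2 v) (WithLp.toLp 2 v)]
    exact Finset.sum_congr rfl fun i _ => (sq _).symm
  rw [e1, e2, Finset.mul_sum]
  exact Finset.sum_le_sum fun i _ => mul_le_mul_of_nonneg_right (hc i) (sq_nonneg _)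

lemma le_sortedDesc_zero' {n : ℕ} (f : Fin n → ℝ) (h : 0 < n) (i : Fin n) :
    f i ≤ sortedDesc f ⟨0, h⟩ := by
  have hm := Tuple.monotone_sort (fun i => - f i)
  set σ := Tuple.sort (fun i => - f i)
  have : ((fun i => - f i) ∘ σ) ⟨0, h⟩ ≤ ((fun i => - f i) ∘ σ) (σ.symm i) :=
    hm (by exact Fin.mk_le_of_le_val (Nat.zero_le _))
  simp only [Function.comp_apply, Equiv.apply_symm_apply] at this
  unfold sortedDesc
  simp only [Function.comp_apply]
  linarith

lemma dot_self_nonneg' {k : ℕ} (x : Fin k → ℝ) : 0 ≤ x ⬝ᵥ x :=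
  Finset.sum_nonneg fun i _ => mul_self_nonneg _

lemma dot_cs' {k : ℕ} (x z : Fin k → ℝ) : (x ⬝ᵥ z) ^ 2 ≤ (x ⬝ᵥ x) * (z ⬝ᵥ z) := by
  simpa [dotProduct, sq] using Finset.sum_mul_sq_le_sq_mul_sq Finset.univ x z

lemma specNorm_nonneg' {m n : ℕ} (A : Matrix (Fin m) (Fin n) ℝ) : 0 ≤ specNorm A := by
  unfold specNorm sval
  split <;> simp [Real.sqrt_nonneg]

lemma vecMul_spec_bound' {ℓ m : ℕ} (F : Matrix (Fin ℓ) (Fin m) ℝ) (x : Fin ℓ → ℝ) :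
    (x ᵥ* F) ⬝ᵥ (x ᵥ* F) ≤ specNorm F ^ 2 * (x ⬝ᵥ x) := by
  rcases Nat.eq_zero_or_pos m with hm | hm
  · subst hm
    have : (x ᵥ* F) ⬝ᵥ (x ᵥ* F) = 0 := by simp [dotProduct]
    rw [this]
    exact mul_nonneg (sq_nonneg _) (dot_self_nonneg' x)
  · set hH := Matrix.isHermitian_conjTranspose_mul_self F with hhH
    set lam := sortedDesc hH.eigenvalues ⟨0, hm⟩ with hlam
    have hle : ∀ i, hH.eigenvalues i ≤ lam := fun i => le_sortedDesc_zero' _ hm i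
    have hpsd : (Fᵀ * F).PosSemidef := by
      have := Matrix.posSemidef_conjTranspose_mul_self F
      rwa [Matrix.conjTranspose_eq_transpose_of_trivial] at this
    have hlam0 : 0 ≤ lam := le_trans (hpsd.eigenvalues_nonneg ⟨0, hm⟩) (hle ⟨0, hm⟩)
    have hs : specNorm F ^ 2 = lam := by
      unfold specNorm sval
      rw [dif_pos hm, Real.sq_sqrt hlam0]
    set y := x ᵥ* F with hy
    have h1 : y ⬝ᵥ y = x ⬝ᵥ (F *ᵥ y) := by rw [dotProduct_mulVec]
    have h2 : (F *ᵥ y) ⬝ᵥ (F *ᵥ y) ≤ lam * (y ⬝ᵥ y) := by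
      have e : y ⬝ᵥ ((Fᵀ * F) *ᵥ y) = (F *ᵥ y) ⬝ᵥ (F *ᵥ y) := by
        rw [← Matrix.mulVec_mulVec, dotProduct_mulVec, vecMul_transpose]
      rw [← e]
      exact quadForm_le' hH hle y
    have cs : (x ⬝ᵥ (F *ᵥ y)) ^ 2 ≤ (x ⬝ᵥ x) * ((F *ᵥ y) ⬝ᵥ (F *ᵥ y)) := dot_cs' _ _
    have key : (y ⬝ᵥ y) ^ 2 ≤ (x ⬝ᵥ x) * (lam * (y ⬝ᵥ y)) := by
      calc (y ⬝ᵥ y) ^ 2 = (x ⬝ᵥ (F *ᵥ y)) ^ 2 := by rw [h1]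
        _ ≤ (x ⬝ᵥ x) * ((F *ᵥ y) ⬝ᵥ (F *ᵥ y)) := cs
        _ ≤ (x ⬝ᵥ x) * (lam * (y ⬝ᵥ y)) :=
            mul_le_mul_of_nonneg_left h2 (dot_self_nonneg' x)
    rw [hs]
    rcases eq_or_lt_of_le (dot_self_nonneg' y) with h0 | h0
    · rw [← h0]
      exact mul_nonneg hlam0 (dot_self_nonneg' x)
    · nlinarith [dot_self_nonneg' x]

lemma frobNorm_mul_spec' {a ℓ m : ℕ} (X : Matrix (Fin a) (Fin ℓ) ℝ)
    (F : Matrix (Fin ℓ) (Fin m) ℝ) :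
    frobNorm (X * F) ≤ specNorm F * frobNorm X := by
  apply frobNorm_le_of_sq_le' (mul_nonneg (specNorm_nonneg' F) (frobNorm_nonneg' X))
  have hrow : ∀ i, ∑ j, (X * F) i j ^ 2 ≤ specNorm F ^ 2 * ∑ k, X i k ^ 2 := by
    intro i
    have h := vecMul_spec_bound' F (X i)
    have e1 : (X i ᵥ* F) ⬝ᵥ (X i ᵥ* F) = ∑ j, (X * F) i j ^ 2 := by
      simp [dotProduct, Matrix.mul_apply, Matrix.vecMul, sq]
    have e2 : (X i) ⬝ᵥ (X i) = ∑ k, X i k ^ 2 := by simp [dotProduct, sq]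
    rw [e1, e2] at h
    exact h
  calc ∑ i, ∑ j, (X * F) i j ^ 2 ≤ ∑ i, specNorm F ^ 2 * ∑ k, X i k ^ 2 :=
        Finset.sum_le_sum fun i _ => hrow i
    _ = specNorm F ^ 2 * ∑ i, ∑ k, X i k ^ 2 := by rw [← Finset.mul_sum]
    _ = (specNorm F * frobNorm X) ^ 2 := by rw [mul_pow, frobNorm_sq']

end Aux

/-- For orthonormal `Q`,
`‖AAᵀ − QQᵀAAᵀ‖_F ≤ 2‖AAᵀΩF − AAᵀ‖_F + 2‖F‖₂‖QR − AAᵀΩ‖_F`. -/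
theorem frob_proj_gram_le {m n μ ℓ : ℕ} (hμm : μ ≤ m)
    (A : Matrix (Fin m) (Fin n) ℝ)
    (Q : Matrix (Fin m) (Fin μ) ℝ) (hQ : Qᵀ * Q = 1)
    (R : Matrix (Fin μ) (Fin ℓ) ℝ) (Ω : Matrix (Fin m) (Fin ℓ) ℝ)
    (F : Matrix (Fin ℓ) (Fin m) ℝ) :
    frobNorm (A * Aᵀ - Q * Qᵀ * (A * Aᵀ)) ≤
      2 * frobNorm (A * Aᵀ * Ω * F - A * Aᵀ) +
        2 * specNorm F * frobNorm (Q * R - A * Aᵀ * Ω) := by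
  have h2 : ∀ {k' : ℕ} (X : Matrix (Fin μ) (Fin k') ℝ), Qᵀ * (Q * X) = X := by
    intro k' X; rw [← Matrix.mul_assoc, hQ, Matrix.one_mul]
  set B := A * Aᵀ with hB
  set D := B - B * Ω * F with hD
  set E := Q * R - B * Ω with hE
  have key : B - Q * Qᵀ * B = (D - Q * Qᵀ * D) + (Q * Qᵀ * E - E) * F := by
    rw [hD, hE]
    simp only [Matrix.mul_sub, Matrix.sub_mul, Matrix.mul_assoc, h2]
    abel
  have step1 : frobNorm (B - Q * Qᵀ * B)
      ≤ frobNorm (D - Q * Qᵀ * D) + frobNorm ((Q * Qᵀ * E - E) * F) := by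
    rw [key]; exact frobNorm_add_le' _ _
  have step2 : frobNorm (D - Q * Qᵀ * D) ≤ frobNorm D := frobNorm_proj_le' Q hQ D
  have step3 : frobNorm ((Q * Qᵀ * E - E) * F) ≤ specNorm F * frobNorm E := by
    have h3 : frobNorm ((Q * Qᵀ * E - E) * F) ≤ specNorm F * frobNorm (Q * Qᵀ * E - E) :=
      frobNorm_mul_spec' _ F
    have h4 : frobNorm (Q * Qᵀ * E - E) = frobNorm (E - Q * Qᵀ * E) := by
      rw [← frobNorm_neg' (E - Q * Qᵀ * E), neg_sub]
    have h5 : frobNorm (E - Q * Qᵀ * E) ≤ frobNorm E := frobNorm_proj_le' Q hQ E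
    calc frobNorm ((Q * Qᵀ * E - E) * F) ≤ specNorm F * frobNorm (Q * Qᵀ * E - E) := h3
      _ = specNorm F * frobNorm (E - Q * Qᵀ * E) := by rw [h4]
      _ ≤ specNorm F * frobNorm E :=
          mul_le_mul_of_nonneg_left h5 (specNorm_nonneg' F)
  have hDrw : frobNorm D = frobNorm (B * Ω * F - B) := by
    rw [hD, ← frobNorm_neg' (B - B * Ω * F), neg_sub]
  have hnn1 : 0 ≤ frobNorm (B * Ω * F - B) := frobNorm_nonneg' _
  have hnn2 : 0 ≤ specNorm F * frobNorm E :=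
    mul_nonneg (specNorm_nonneg' F) (frobNorm_nonneg' _)
  have : frobNorm (B - Q * Qᵀ * B) ≤ frobNorm (B * Ω * F - B) + specNorm F * frobNorm E := by
    calc frobNorm (B - Q * Qᵀ * B)
        ≤ frobNorm (D - Q * Qᵀ * D) + frobNorm ((Q * Qᵀ * E - E) * F) := step1
      _ ≤ frobNorm D + specNorm F * frobNorm E := add_le_add step2 step3
      _ = frobNorm (B * Ω * F - B) + specNorm F * frobNorm E := by rw [hDrw]
  rw [hE] at this hnn2
  linarith
end

section
/- Let A ∈ ℝ^{m×n} and let Q ∈ ℝ^{m×μ} be orthonormal (QᵀQ = I_μ). Then ‖A − QQᵀA‖_F² ≤ rank(A) · ‖AAᵀ − QQᵀAAᵀ‖_F, where rank(A) is the rank of A regarded as a real number. -/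
open Matrix
open scoped BigOperators

lemma trace_mul_transpose_self_eq' {m n : ℕ} (X : Matrix (Fin m) (Fin n) ℝ) :
    trace (X * Xᵀ) = ∑ i, ∑ j, X i j ^ 2 := by
  simp [trace, mul_apply, diag, sq]

lemma trace_mul_transpose_self_nonneg' {m n : ℕ} (X : Matrix (Fin m) (Fin n) ℝ) :
    0 ≤ trace (X * Xᵀ) := by
  rw [trace_mul_transpose_self_eq']
  positivity

lemma frobNorm_eq_sqrt_trace' {m n : ℕ} (X : Matrix (Fin m) (Fin n) ℝ) :
    frobNorm X = Real.sqrt (trace (X * Xᵀ)) := by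
  rw [frobNorm, trace_mul_transpose_self_eq']

/-- For a PSD matrix, `trace N ≤ √(rank N) · √(trace (N²))`. -/
lemma psd_trace_le' {m : ℕ} (N : Matrix (Fin m) (Fin m) ℝ) (hN : N.PosSemidef) :
    trace N ≤ Real.sqrt N.rank * Real.sqrt (trace (N * N)) := by
  have hH := hN.1
  set U : Matrix (Fin m) (Fin m) ℝ := (hH.eigenvectorUnitary : Matrix (Fin m) (Fin m) ℝ) with hU
  have hUU : star U * U = 1 := (Matrix.mem_unitaryGroup_iff').mp (hH.eigenvectorUnitary).2
  set D : Matrix (Fin m) (Fin m) ℝ := diagonal (RCLike.ofReal ∘ hH.eigenvalues) with hD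
  have hspec : N = U * D * star U := hH.spectral_theorem
  have h1 : trace N = ∑ i, hH.eigenvalues i := by
    conv_lhs => rw [hspec]
    rw [trace_mul_comm, ← mul_assoc, hUU, one_mul, hD, trace_diagonal]
    simp
  have h2 : trace (N * N) = ∑ i, hH.eigenvalues i ^ 2 := by
    have hNN : N * N = U * (D * D) * star U := by
      conv_lhs => rw [hspec]
      calc U * D * star U * (U * D * star U)
          = U * (D * ((star U * U) * D)) * star U := by
            simp only [mul_assoc]
        _ = U * (D * D) * star U := by rw [hUU, one_mul]
    rw [hNN, trace_mul_comm, ← mul_assoc, hUU, one_mul, hD]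
    simp [diagonal_mul_diagonal, trace_diagonal, sq]
  classical
  have hrank : (N.rank : ℝ) = (Finset.univ.filter fun i => hH.eigenvalues i ≠ 0).card := by
    rw [hH.rank_eq_card_non_zero_eigs]
    norm_cast
    exact Fintype.card_subtype _
  set s := Finset.univ.filter fun i => hH.eigenvalues i ≠ 0 with hs
  have hsum : ∑ i, hH.eigenvalues i = ∑ i ∈ s, hH.eigenvalues i := by
    rw [hs]
    exact (Finset.sum_filter_ne_zero _).symm
  have hcs : (∑ i ∈ s, 1 * hH.eigenvalues i) ^ 2 ≤
      (∑ i ∈ s, (1:ℝ) ^ 2) * ∑ i ∈ s, hH.eigenvalues i ^ 2 :=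
    Finset.sum_mul_sq_le_sq_mul_sq s _ _
  have hnn : ∀ i, 0 ≤ hH.eigenvalues i := hN.eigenvalues_nonneg
  have hle2 : ∑ i ∈ s, hH.eigenvalues i ^ 2 ≤ ∑ i, hH.eigenvalues i ^ 2 :=
    Finset.sum_le_sum_of_subset_of_nonneg (Finset.subset_univ s)
      (fun i _ _ => sq_nonneg _)
  have hkey : (∑ i, hH.eigenvalues i) ^ 2 ≤ (N.rank : ℝ) * ∑ i, hH.eigenvalues i ^ 2 := by
    rw [hsum, hrank]
    calc (∑ i ∈ s, hH.eigenvalues i) ^ 2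
        ≤ (∑ i ∈ s, (1:ℝ) ^ 2) * ∑ i ∈ s, hH.eigenvalues i ^ 2 := by
          simpa using hcs
      _ = (s.card : ℝ) * ∑ i ∈ s, hH.eigenvalues i ^ 2 := by simp
      _ ≤ (s.card : ℝ) * ∑ i, hH.eigenvalues i ^ 2 :=
          mul_le_mul_of_nonneg_left hle2 (Nat.cast_nonneg _)
  rw [h1, h2, ← Real.sqrt_mul (by positivity)]
  have h0 : 0 ≤ ∑ i, hH.eigenvalues i := Finset.sum_nonneg fun i _ => hnn i
  calc ∑ i, hH.eigenvalues i = Real.sqrt ((∑ i, hH.eigenvalues i) ^ 2) := by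
        rw [Real.sqrt_sq h0]
    _ ≤ Real.sqrt ((N.rank : ℝ) * ∑ i, hH.eigenvalues i ^ 2) := Real.sqrt_le_sqrt hkey

/-- For orthonormal `Q`,
`‖A − QQᵀA‖_F² ≤ rank(A) · ‖AAᵀ − QQᵀAAᵀ‖_F`. -/
theorem frob_sq_le_rank_mul {m n μ : ℕ} (hμm : μ ≤ m)
    (A : Matrix (Fin m) (Fin n) ℝ)
    (Q : Matrix (Fin m) (Fin μ) ℝ) (hQ : Qᵀ * Q = 1) :
    frobNorm (A - Q * Qᵀ * A) ^ 2 ≤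
      (A.rank : ℝ) * frobNorm (A * Aᵀ - Q * Qᵀ * (A * Aᵀ)) := by
  set P : Matrix (Fin m) (Fin m) ℝ := Q * Qᵀ with hP
  set R : Matrix (Fin m) (Fin m) ℝ := 1 - P with hR
  have hPt : Pᵀ = P := by rw [hP, transpose_mul, transpose_transpose]
  have hPP : P * P = P := by
    rw [hP, Matrix.mul_assoc, ← Matrix.mul_assoc Qᵀ, hQ, Matrix.one_mul]
  have hRt : Rᵀ = R := by rw [hR, transpose_sub, transpose_one, hPt]
  have hRP : R * P = 0 := by rw [hR, Matrix.sub_mul, Matrix.one_mul, hPP, sub_self]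
  set B : Matrix (Fin m) (Fin n) ℝ := A - Q * Qᵀ * A with hB
  have hBR : B = R * A := by rw [hB, hR, Matrix.sub_mul, Matrix.one_mul, hP]
  set M : Matrix (Fin m) (Fin m) ℝ := A * Aᵀ - Q * Qᵀ * (A * Aᵀ) with hM
  have hMR : M = R * (A * Aᵀ) := by rw [hM, hR, Matrix.sub_mul, Matrix.one_mul, hP]
  set N : Matrix (Fin m) (Fin m) ℝ := M * R with hN
  have hNB : N = B * Bᵀ := by
    rw [hN, hMR, hBR, transpose_mul, hRt]
    simp only [Matrix.mul_assoc]
  have hNsym : Nᵀ = N := by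
    rw [hNB, transpose_mul, transpose_transpose]
  have hNpsd : N.PosSemidef := by
    rw [hNB]
    have := Matrix.posSemidef_self_mul_conjTranspose B
    rwa [conjTranspose_eq_transpose_of_trivial] at this
  have hMdecomp : M = N + M * P := by
    rw [hN, ← Matrix.mul_add, hR, sub_add_cancel, Matrix.mul_one]
  have hcross : trace (N * (M * P)ᵀ) = 0 := by
    rw [hN, transpose_mul, hPt]
    rw [show M * R * (P * Mᵀ) = M * (R * P) * Mᵀ by simp only [Matrix.mul_assoc]]
    rw [hRP]
    simp
  have hcross2 : trace ((M * P) * Nᵀ) = 0 := by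
    rw [← trace_transpose, transpose_mul, transpose_transpose]
    exact hcross
  have hsplit : trace (M * Mᵀ) = trace (N * Nᵀ) + trace ((M * P) * (M * P)ᵀ) := by
    conv_lhs => rw [hMdecomp]
    rw [transpose_add, Matrix.add_mul, Matrix.mul_add, Matrix.mul_add, trace_add,
      trace_add, trace_add, hcross, hcross2]
    ring
  have htr : trace (N * N) ≤ trace (M * Mᵀ) := by
    rw [hsplit, hNsym]
    have := trace_mul_transpose_self_nonneg' (M * P)
    linarith
  have hrk : N.rank ≤ A.rank := by
    rw [hNB]
    calc (B * Bᵀ).rank ≤ B.rank := rank_mul_le_left _ _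
      _ = (R * A).rank := by rw [hBR]
      _ ≤ A.rank := rank_mul_le_right _ _
  -- √(rank N) ≤ rank A
  have hsq : Real.sqrt N.rank ≤ (A.rank : ℝ) := by
    have h1 : (N.rank : ℝ) ≤ ((A.rank : ℝ)) ^ 2 := by
      have h2 : A.rank ≤ A.rank ^ 2 := Nat.le_self_pow two_ne_zero _
      have : (N.rank : ℝ) ≤ (A.rank : ℝ) := by exact_mod_cast hrk
      calc (N.rank : ℝ) ≤ (A.rank : ℝ) := this
        _ ≤ ((A.rank : ℝ)) ^ 2 := by exact_mod_cast h2
    calc Real.sqrt N.rank ≤ Real.sqrt (((A.rank : ℝ)) ^ 2) := Real.sqrt_le_sqrt h1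
      _ = (A.rank : ℝ) := Real.sqrt_sq (by positivity)
  -- assemble
  have hLHS : frobNorm B ^ 2 = trace N := by
    rw [frobNorm_eq_sqrt_trace', Real.sq_sqrt (trace_mul_transpose_self_nonneg' B), hNB]
  have hRHS : frobNorm M = Real.sqrt (trace (M * Mᵀ)) := frobNorm_eq_sqrt_trace' M
  rw [hLHS, hRHS]
  calc trace N ≤ Real.sqrt N.rank * Real.sqrt (trace (N * N)) := psd_trace_le' N hNpsd
    _ ≤ (A.rank : ℝ) * Real.sqrt (trace (M * Mᵀ)) := by
        apply mul_le_mul hsq (Real.sqrt_le_sqrt htr) (Real.sqrt_nonneg _) (by positivity)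
end
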